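/- Let j be a half-integer (2j ∈ ℕ) and let s, m satisfy j+s, j−s, j+m, j−m ∈ ℕ and s ≤ j−1. Set ψ₁ = √(j+s+1)·Y^j_{sm} and ψ₂ = √(j−s)·Y^j_{s+1,m}. Then 2i·(X₃ψ₁ + X₋ψ₂) = 2j·ψ₁ and 2i·(X₊ψ₁ − X₃ψ₂) = 2j·ψ₂. Likewise, setting φ₁ = −√(j−s)·Y^j_{sm} and φ₂ = √(j+s+1)·Y^j_{s+1,m}, one has 2i·(X₃φ₁ + X₋φ₂) = −(2j+2)·φ₁ and 2i·(X₊φ₁ − X₃φ₂) = −(2j+2)·φ₂. (These are the component equations expressing that Ψ^{j±}_{sm} are eigenspinors of the Dirac operator on the 3-sphere of radius ℓ with eigenvalues λ± = (1/ℓ)(1/2 ± (2j+1)).) -/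

import Mathlib

open MvPolynomial

noncomputable section

/-- Work in ℂ[z₁,z₂,w₁,w₂]: variable 0 is z₁, 1 is z₂, 2 is w₁, 3 is w₂
(w₁, w₂ playing the role of the complex conjugates z̄₁, z̄₂). -/
abbrev R4 := MvPolynomial (Fin 4) ℂ

/-- The derivation X₊ = i(z₁·∂/∂w₂ − z₂·∂/∂w₁). -/
def Xp (P : R4) : R4 := Complex.I • (X 0 * pderiv 3 P - X 1 * pderiv 2 P)

/-- The derivation X₋ = i(w₂·∂/∂z₁ − w₁·∂/∂z₂). -/
def Xm (P : R4) : R4 := Complex.I • (X 3 * pderiv 0 P - X 2 * pderiv 1 P)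

/-- The derivation X₃ = (i/2)(w₁·∂/∂w₁ + w₂·∂/∂w₂ − z₁·∂/∂z₁ − z₂·∂/∂z₂). -/
def X3 (P : R4) : R4 :=
  (Complex.I / 2) •
    (X 2 * pderiv 2 P + X 3 * pderiv 3 P - X 0 * pderiv 0 P - X 1 * pderiv 1 P)

/-- The harmonic Y^j_{sm} with a = j+s, b = j−s, c = j+m, d = j−m (so a+b = c+d = 2j):
Y^j_{sm} = (−1)^{j−s}·(a!b!c!d!)^{1/2} · Σ_k (−1)^k/((c−k)!·k!·(b−k)!·(a−c+k)!) ·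
z₁^{a−c+k}·z₂^{c−k}·w₁^k·w₂^{b−k}, summed over max(0,c−a) ≤ k ≤ min(c,b);
note s−m = a−c, j+m−k = c−k, j−s−k = b−k, s−m+k = a−c+k. -/
def Ypoly (a b c d : ℕ) : R4 :=
  ((-1 : ℂ) ^ b *
      (Real.sqrt ((a.factorial * b.factorial * c.factorial * d.factorial : ℕ)) : ℂ)) •
    ∑ k ∈ Finset.Icc (c - a) (min c b),
      ((-1 : ℂ) ^ k /
          (((c - k).factorial * k.factorial * (b - k).factorial
              * (a + k - c).factorial : ℕ) : ℂ)) •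
        (X 0 ^ (a + k - c) * X 1 ^ (c - k) * X 2 ^ k * X 3 ^ (b - k))
/-! ### Auxiliary machinery -/

/-- basic monomial -/
def mon (p q r t : ℕ) : R4 := X 0 ^ p * X 1 ^ q * X 2 ^ r * X 3 ^ t

section monlemmas
variable (p q r t : ℕ)

lemma X0d0 : X 0 * pderiv 0 (mon p q r t) = (p:ℂ) • mon p q r t := by
  unfold mon
  simp only [pderiv_mul, pderiv_pow, pderiv_X_self,
    pderiv_X_of_ne (show (1:Fin 4) ≠ 0 by decide),
    pderiv_X_of_ne (show (2:Fin 4) ≠ 0 by decide),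
    pderiv_X_of_ne (show (3:Fin 4) ≠ 0 by decide),
    mul_zero, zero_mul, add_zero, zero_add, mul_one]
  cases p with
  | zero => simp
  | succ n =>
    simp only [Nat.add_sub_cancel, smul_eq_C_mul, map_add, map_natCast, map_one]
    push_cast; ring

lemma X1d1 : X 1 * pderiv 1 (mon p q r t) = (q:ℂ) • mon p q r t := by
  unfold mon
  simp only [pderiv_mul, pderiv_pow, pderiv_X_self,
    pderiv_X_of_ne (show (0:Fin 4) ≠ 1 by decide),
    pderiv_X_of_ne (show (2:Fin 4) ≠ 1 by decide),
    pderiv_X_of_ne (show (3:Fin 4) ≠ 1 by decide),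
    mul_zero, zero_mul, add_zero, zero_add, mul_one]
  cases q with
  | zero => simp
  | succ n =>
    simp only [Nat.add_sub_cancel, smul_eq_C_mul, map_add, map_natCast, map_one]
    push_cast; ring

lemma X2d2 : X 2 * pderiv 2 (mon p q r t) = (r:ℂ) • mon p q r t := by
  unfold mon
  simp only [pderiv_mul, pderiv_pow, pderiv_X_self,
    pderiv_X_of_ne (show (0:Fin 4) ≠ 2 by decide),
    pderiv_X_of_ne (show (1:Fin 4) ≠ 2 by decide),
    pderiv_X_of_ne (show (3:Fin 4) ≠ 2 by decide),
    mul_zero, zero_mul, add_zero, zero_add, mul_one]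
  cases r with
  | zero => simp
  | succ n =>
    simp only [Nat.add_sub_cancel, smul_eq_C_mul, map_add, map_natCast, map_one]
    push_cast; ring

lemma X3d3 : X 3 * pderiv 3 (mon p q r t) = (t:ℂ) • mon p q r t := by
  unfold mon
  simp only [pderiv_mul, pderiv_pow, pderiv_X_self,
    pderiv_X_of_ne (show (0:Fin 4) ≠ 3 by decide),
    pderiv_X_of_ne (show (1:Fin 4) ≠ 3 by decide),
    pderiv_X_of_ne (show (2:Fin 4) ≠ 3 by decide),
    mul_zero, zero_mul, add_zero, zero_add, mul_one]
  cases t with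
  | zero => simp
  | succ n =>
    simp only [Nat.add_sub_cancel, smul_eq_C_mul, map_add, map_natCast, map_one]
    push_cast; ring

lemma X0d3 : X 0 * pderiv 3 (mon p q r t) = (t:ℂ) • mon (p+1) q r (t-1) := by
  unfold mon
  simp only [pderiv_mul, pderiv_pow, pderiv_X_self,
    pderiv_X_of_ne (show (0:Fin 4) ≠ 3 by decide),
    pderiv_X_of_ne (show (1:Fin 4) ≠ 3 by decide),
    pderiv_X_of_ne (show (2:Fin 4) ≠ 3 by decide),
    mul_zero, zero_mul, add_zero, zero_add, mul_one]
  cases t with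
  | zero => simp
  | succ n =>
    simp only [Nat.add_sub_cancel, smul_eq_C_mul, map_add, map_natCast, map_one]
    push_cast; ring

lemma X1d2 : X 1 * pderiv 2 (mon p q r t) = (r:ℂ) • mon p (q+1) (r-1) t := by
  unfold mon
  simp only [pderiv_mul, pderiv_pow, pderiv_X_self,
    pderiv_X_of_ne (show (0:Fin 4) ≠ 2 by decide),
    pderiv_X_of_ne (show (1:Fin 4) ≠ 2 by decide),
    pderiv_X_of_ne (show (3:Fin 4) ≠ 2 by decide),
    mul_zero, zero_mul, add_zero, zero_add, mul_one]
  cases r with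
  | zero => simp
  | succ n =>
    simp only [Nat.add_sub_cancel, smul_eq_C_mul, map_add, map_natCast, map_one]
    push_cast; ring

lemma X3d0 : X 3 * pderiv 0 (mon p q r t) = (p:ℂ) • mon (p-1) q r (t+1) := by
  unfold mon
  simp only [pderiv_mul, pderiv_pow, pderiv_X_self,
    pderiv_X_of_ne (show (1:Fin 4) ≠ 0 by decide),
    pderiv_X_of_ne (show (2:Fin 4) ≠ 0 by decide),
    pderiv_X_of_ne (show (3:Fin 4) ≠ 0 by decide),
    mul_zero, zero_mul, add_zero, zero_add, mul_one]
  cases p with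
  | zero => simp
  | succ n =>
    simp only [Nat.add_sub_cancel, smul_eq_C_mul, map_add, map_natCast, map_one]
    push_cast; ring

lemma X2d1 : X 2 * pderiv 1 (mon p q r t) = (q:ℂ) • mon p (q-1) (r+1) t := by
  unfold mon
  simp only [pderiv_mul, pderiv_pow, pderiv_X_self,
    pderiv_X_of_ne (show (0:Fin 4) ≠ 1 by decide),
    pderiv_X_of_ne (show (2:Fin 4) ≠ 1 by decide),
    pderiv_X_of_ne (show (3:Fin 4) ≠ 1 by decide),
    mul_zero, zero_mul, add_zero, zero_add, mul_one]
  cases q with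
  | zero => simp
  | succ n =>
    simp only [Nat.add_sub_cancel, smul_eq_C_mul, map_add, map_natCast, map_one]
    push_cast; ring

end monlemmas

/-- coefficient of `Ypoly`, set to zero outside the valid range -/
def cY (a b c k : ℕ) : ℂ :=
  if c - a ≤ k ∧ k ≤ c ∧ k ≤ b then
    (-1 : ℂ) ^ k /
      (((c - k).factorial * k.factorial * (b - k).factorial * (a + k - c).factorial : ℕ) : ℂ)
  else 0

/-- the sum part of `Ypoly`, over a uniform index range -/
def Tm (a b c : ℕ) : R4 :=
  ∑ k ∈ Finset.range (a + b + 1), cY a b c k • mon (a + k - c) (c - k) k (b - k)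

lemma Ypoly_eq (a b c d : ℕ) :
    Ypoly a b c d = ((-1 : ℂ) ^ b *
      (Real.sqrt ((a.factorial * b.factorial * c.factorial * d.factorial : ℕ)) : ℂ)) •
      Tm a b c := by
  unfold Ypoly Tm
  congr 1
  have hsub : Finset.Icc (c - a) (min c b) ⊆ Finset.range (a + b + 1) := by
    intro k hk; rw [Finset.mem_Icc] at hk; simp only [Finset.mem_range]; omega
  calc ∑ k ∈ Finset.Icc (c - a) (min c b),
        ((-1 : ℂ) ^ k /
          (((c - k).factorial * k.factorial * (b - k).factorial
              * (a + k - c).factorial : ℕ) : ℂ)) •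
        (X 0 ^ (a + k - c) * X 1 ^ (c - k) * X 2 ^ k * X 3 ^ (b - k))
      = ∑ k ∈ Finset.Icc (c - a) (min c b), cY a b c k • mon (a + k - c) (c - k) k (b - k) := by
        refine Finset.sum_congr rfl fun k hk => ?_
        rw [Finset.mem_Icc] at hk
        simp only [cY, mon, if_pos (show c - a ≤ k ∧ k ≤ c ∧ k ≤ b by omega)]
    _ = ∑ k ∈ Finset.range (a + b + 1), cY a b c k • mon (a + k - c) (c - k) k (b - k) := by
        refine Finset.sum_subset hsub fun k _ hk => ?_
        rw [Finset.mem_Icc] at hk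
        simp only [cY, if_neg (show ¬(c - a ≤ k ∧ k ≤ c ∧ k ≤ b) by omega), zero_smul]
/-! ### key scalar identities -/

theorem key1 (A B Cc k : ℕ) :
    (-1:ℂ)^k / ((((Cc+1).factorial * k.factorial * (B+1).factorial * A.factorial : ℕ)):ℂ) * (((B+1:ℕ)):ℂ)
      - (-1:ℂ)^(k+1) / (((Cc.factorial * (k+1).factorial * B.factorial * (A+1).factorial : ℕ)):ℂ) * (((k+1:ℕ)):ℂ)
    = ((A:ℂ) + (Cc:ℂ) + 2) * ((-1:ℂ)^k / ((((Cc+1).factorial * k.factorial * B.factorial * (A+1).factorial : ℕ)):ℂ)) := by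
  have hp : ((((Cc+1).factorial * k.factorial * (B+1).factorial * A.factorial : ℕ)):ℂ) ≠ 0 :=
    Nat.cast_ne_zero.mpr (by positivity)
  have hq : (((Cc.factorial * (k+1).factorial * B.factorial * (A+1).factorial : ℕ)):ℂ) ≠ 0 :=
    Nat.cast_ne_zero.mpr (by positivity)
  have hr : ((((Cc+1).factorial * k.factorial * B.factorial * (A+1).factorial : ℕ)):ℂ) ≠ 0 :=
    Nat.cast_ne_zero.mpr (by positivity)
  rw [div_mul_eq_mul_div, div_mul_eq_mul_div, div_sub_div _ _ hp hq, ← mul_div_assoc,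
    div_eq_div_iff (mul_ne_zero hp hq) hr]
  push_cast [Nat.factorial_succ]
  ring

theorem key2 (A B k : ℕ) :
    (-1:ℂ)^k / (((Nat.factorial 0 * k.factorial * (B+1).factorial * A.factorial : ℕ)):ℂ) * (((B+1:ℕ)):ℂ)
      = ((A:ℂ) + 1) * ((-1:ℂ)^k / (((Nat.factorial 0 * k.factorial * B.factorial * (A+1).factorial : ℕ)):ℂ)) := by
  have hp : (((Nat.factorial 0 * k.factorial * (B+1).factorial * A.factorial : ℕ)):ℂ) ≠ 0 :=
    Nat.cast_ne_zero.mpr (by positivity)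
  have hr : (((Nat.factorial 0 * k.factorial * B.factorial * (A+1).factorial : ℕ)):ℂ) ≠ 0 :=
    Nat.cast_ne_zero.mpr (by positivity)
  rw [div_mul_eq_mul_div, ← mul_div_assoc, div_eq_div_iff hp hr]
  push_cast [Nat.factorial_succ]
  ring

theorem key3 (A B k : ℕ) :
    (0:ℂ) - (-1:ℂ)^(k+1) / (((A.factorial * (k+1).factorial * B.factorial * Nat.factorial 0 : ℕ)):ℂ) * (((k+1:ℕ)):ℂ)
      = ((A:ℂ) + 1) * ((-1:ℂ)^k / ((((A+1).factorial * k.factorial * B.factorial * Nat.factorial 0 : ℕ)):ℂ)) := by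
  have hp : (((A.factorial * (k+1).factorial * B.factorial * Nat.factorial 0 : ℕ)):ℂ) ≠ 0 :=
    Nat.cast_ne_zero.mpr (by positivity)
  have hr : ((((A+1).factorial * k.factorial * B.factorial * Nat.factorial 0 : ℕ)):ℂ) ≠ 0 :=
    Nat.cast_ne_zero.mpr (by positivity)
  rw [zero_sub, div_mul_eq_mul_div, ← mul_div_assoc, ← neg_div, div_eq_div_iff hp hr]
  push_cast [Nat.factorial_succ]
  ring

theorem key4 (A B c0 : ℕ) :
    (-1:ℂ)^0 / (((c0.factorial * Nat.factorial 0 * B.factorial * (A+1).factorial : ℕ)):ℂ) * (((A+1:ℕ)):ℂ)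
      = (((B+1:ℕ)):ℂ) * ((-1:ℂ)^0 / (((c0.factorial * Nat.factorial 0 * (B+1).factorial * A.factorial : ℕ)):ℂ)) := by
  have hp : (((c0.factorial * Nat.factorial 0 * B.factorial * (A+1).factorial : ℕ)):ℂ) ≠ 0 :=
    Nat.cast_ne_zero.mpr (by positivity)
  have hr : (((c0.factorial * Nat.factorial 0 * (B+1).factorial * A.factorial : ℕ)):ℂ) ≠ 0 :=
    Nat.cast_ne_zero.mpr (by positivity)
  rw [div_mul_eq_mul_div, ← mul_div_assoc, div_eq_div_iff hp hr]
  push_cast [Nat.factorial_succ]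
  ring

theorem key5 (A B Cc k : ℕ) :
    (-1:ℂ)^(k+1) / (((Cc.factorial * (k+1).factorial * B.factorial * (A+1).factorial : ℕ)):ℂ) * (((A+1:ℕ)):ℂ)
      - (-1:ℂ)^k / ((((Cc+1).factorial * k.factorial * (B+1).factorial * A.factorial : ℕ)):ℂ) * (((Cc+1:ℕ)):ℂ)
    = (((B+k+2:ℕ)):ℂ) * ((-1:ℂ)^(k+1) / (((Cc.factorial * (k+1).factorial * (B+1).factorial * A.factorial : ℕ)):ℂ)) := by
  have hp : (((Cc.factorial * (k+1).factorial * B.factorial * (A+1).factorial : ℕ)):ℂ) ≠ 0 :=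
    Nat.cast_ne_zero.mpr (by positivity)
  have hq : ((((Cc+1).factorial * k.factorial * (B+1).factorial * A.factorial : ℕ)):ℂ) ≠ 0 :=
    Nat.cast_ne_zero.mpr (by positivity)
  have hr : (((Cc.factorial * (k+1).factorial * (B+1).factorial * A.factorial : ℕ)):ℂ) ≠ 0 :=
    Nat.cast_ne_zero.mpr (by positivity)
  rw [div_mul_eq_mul_div, div_mul_eq_mul_div, div_sub_div _ _ hp hq, ← mul_div_assoc,
    div_eq_div_iff (mul_ne_zero hp hq) hr]
  push_cast [Nat.factorial_succ]
  ring

theorem key6 (A Cc k : ℕ) :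
    -((-1:ℂ)^k / ((((Cc+1).factorial * k.factorial * Nat.factorial 0 * A.factorial : ℕ)):ℂ) * (((Cc+1:ℕ)):ℂ))
      = (((k+1:ℕ)):ℂ) * ((-1:ℂ)^(k+1) / (((Cc.factorial * (k+1).factorial * Nat.factorial 0 * A.factorial : ℕ)):ℂ)) := by
  have hp : ((((Cc+1).factorial * k.factorial * Nat.factorial 0 * A.factorial : ℕ)):ℂ) ≠ 0 :=
    Nat.cast_ne_zero.mpr (by positivity)
  have hr : (((Cc.factorial * (k+1).factorial * Nat.factorial 0 * A.factorial : ℕ)):ℂ) ≠ 0 :=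
    Nat.cast_ne_zero.mpr (by positivity)
  rw [div_mul_eq_mul_div, ← neg_div, ← mul_div_assoc, div_eq_div_iff hp hr]
  push_cast [Nat.factorial_succ]
  ring
lemma X3'_Tm (a b c : ℕ) (hc : c ≤ a + b) :
    X 2 * pderiv 2 (Tm a b c) + X 3 * pderiv 3 (Tm a b c) - X 0 * pderiv 0 (Tm a b c)
      - X 1 * pderiv 1 (Tm a b c) = ((b:ℂ) - (a:ℂ)) • Tm a b c := by
  unfold Tm
  simp only [map_sum, Derivation.map_smul, Finset.mul_sum, Finset.smul_sum, mul_smul_comm]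
  simp only [X0d0, X1d1, X2d2, X3d3]
  rw [← Finset.sum_add_distrib, ← Finset.sum_sub_distrib, ← Finset.sum_sub_distrib]
  refine Finset.sum_congr rfl fun k hk => ?_
  by_cases h : c - a ≤ k ∧ k ≤ c ∧ k ≤ b
  · simp only [smul_smul, ← add_smul, ← sub_smul]
    congr 1
    rw [Nat.cast_sub h.2.2, Nat.cast_sub h.2.1, Nat.cast_sub (show c ≤ a + k by omega)]
    push_cast
    ring
  · simp only [cY, if_neg h, zero_smul, smul_zero, add_zero, sub_zero, sub_self]

lemma Xp'_Tm (a b c : ℕ) (hc : c ≤ a + b) (hb : 1 ≤ b) :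
    X 0 * pderiv 3 (Tm a b c) - X 1 * pderiv 2 (Tm a b c)
      = ((a:ℂ) + 1) • Tm (a+1) (b-1) c := by
  have hN : a + 1 + (b - 1) + 1 = a + b + 1 := by omega
  unfold Tm
  rw [hN]
  simp only [map_sum, Derivation.map_smul, Finset.mul_sum, Finset.smul_sum, mul_smul_comm]
  simp only [X0d3, X1d2, smul_smul]
  rw [Finset.sum_range_succ, Finset.sum_range_succ' _ (a + b), Finset.sum_range_succ]
  rw [show b - (a + b) = 0 from by omega]
  rw [show cY (a+1) (b-1) c (a+b) = 0 from by rw [cY, if_neg (by omega)]]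
  simp only [Nat.cast_zero, mul_zero, zero_smul, add_zero, zero_mul, smul_zero]
  rw [← Finset.sum_sub_distrib]
  refine Finset.sum_congr rfl fun k hk => ?_
  simp only [Finset.mem_range] at hk
  simp only [cY]
  split_ifs with h1 h2 h3 h4 h5 h6 h7
  · -- TTT generic
    obtain ⟨A, hA⟩ : ∃ A, a + k - c = A := ⟨_, rfl⟩
    obtain ⟨B, hB⟩ : ∃ B, b - (k+1) = B := ⟨_, rfl⟩
    obtain ⟨Cc, hCc⟩ : ∃ Cc, c - (k+1) = Cc := ⟨_, rfl⟩
    rw [show a+k-c+1 = A+1 from by omega, show c-k = Cc+1 from by omega,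
      show b-k-1 = B from by omega, show a+(k+1)-c = A+1 from by omega,
      show c-(k+1)+1 = Cc+1 from by omega, show k+1-1 = k from by omega,
      show b-(k+1) = B from by omega, show a+1+k-c = A+1 from by omega,
      show b-1-k = B from by omega, show b-k = B+1 from by omega,
      show a+k-c = A from by omega, show c-(k+1) = Cc from by omega]
    rw [← sub_smul]
    congr 1
    rw [show (a:ℂ)+1 = (A:ℂ)+(Cc:ℂ)+2 from by
      have h : a + 1 = A + Cc + 2 := by omega
      exact_mod_cast congrArg (Nat.cast : ℕ → ℂ) h]
    exact key1 A B Cc k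
  · -- TTF impossible
    exfalso; omega
  · -- TFT : k = c
    simp only [zero_mul, zero_smul, sub_zero]
    obtain ⟨B, hB⟩ : ∃ B, b - 1 - k = B := ⟨_, rfl⟩
    rw [show a+k-c+1 = a+1 from by omega, show b-k-1 = B from by omega,
      show a+1+k-c = a+1 from by omega, show b-1-k = B from by omega,
      show b-k = B+1 from by omega, show a+k-c = a from by omega,
      show c-k = 0 from by omega]
    congr 1
    exact key2 a B k
  · -- TFF : k = b
    rw [show b - k = 0 from by omega]
    simp
  · -- FTT : c = a+k+1
    simp only [zero_mul, zero_smul]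
    obtain ⟨B, hB⟩ : ∃ B, b - 1 - k = B := ⟨_, rfl⟩
    rw [show c-(k+1)+1 = a+1 from by omega, show k+1-1 = k from by omega,
      show b-(k+1) = B from by omega, show a+(k+1)-c = 0 from by omega,
      show c-(k+1) = a from by omega, show c-k = a+1 from by omega,
      show a+1+k-c = 0 from by omega, show b-1-k = B from by omega]
    rw [zero_sub, ← neg_smul]
    congr 1
    have h := key3 a B k
    rw [zero_sub] at h
    exact h
  · -- FTF impossible
    exfalso; omega
  · -- FFT impossible
    exfalso; omega
  · -- FFF
    simp

lemma Xm'_Tm (a b c : ℕ) (hc : c ≤ a + b) (hb : 1 ≤ b) :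
    X 3 * pderiv 0 (Tm (a+1) (b-1) c) - X 2 * pderiv 1 (Tm (a+1) (b-1) c)
      = (b:ℂ) • Tm a b c := by
  have hN : a + 1 + (b - 1) + 1 = a + b + 1 := by omega
  unfold Tm
  rw [hN]
  simp only [map_sum, Derivation.map_smul, Finset.mul_sum, Finset.smul_sum, mul_smul_comm]
  simp only [X3d0, X2d1, smul_smul]
  rw [Finset.sum_range_succ' _ (a + b), Finset.sum_range_succ, Finset.sum_range_succ' _ (a + b)]
  rw [show cY (a+1) (b-1) c (a+b) = 0 from by rw [cY, if_neg (by omega)]]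
  simp only [zero_mul, zero_smul, add_zero]
  rw [add_sub_right_comm]
  refine congrArg₂ HAdd.hAdd ?_ ?_
  · -- main sums
    rw [← Finset.sum_sub_distrib]
    refine Finset.sum_congr rfl fun k hk => ?_
    simp only [Finset.mem_range] at hk
    simp only [cY]
    split_ifs with h1 h2 h3 h4 h5 h6 h7
    · -- TTT generic
      obtain ⟨A, hA⟩ : ∃ A, a + k + 1 - c = A := ⟨_, rfl⟩
      obtain ⟨B, hB⟩ : ∃ B, b - (k+2) = B := ⟨_, rfl⟩
      obtain ⟨Cc, hCc⟩ : ∃ Cc, c - (k+1) = Cc := ⟨_, rfl⟩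
      rw [show a+1+(k+1)-c-1 = A from by omega, show a+1+(k+1)-c = A+1 from by omega,
        show c-(k+1) = Cc from by omega, show b-1-(k+1)+1 = B+1 from by omega,
        show b-1-(k+1) = B from by omega,
        show a+1+k-c = A from by omega, show c-k-1 = Cc from by omega,
        show c-k = Cc+1 from by omega, show b-1-k = B+1 from by omega,
        show a+(k+1)-c = A from by omega, show b-(k+1) = B+1 from by omega,
        show (b:ℂ) = (((B+k+2:ℕ)):ℂ) from by exact_mod_cast congrArg (Nat.cast : ℕ → ℂ) (by omega : b = B+k+2)]
      rw [← sub_smul]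
      congr 1
      exact key5 A B Cc k
    · -- TTF impossible
      exfalso; omega
    · -- TFT impossible
      exfalso; omega
    · -- TFF : c = a+k+2
      rw [show a+1+(k+1)-c = 0 from by omega]
      simp
    · -- FTT : k+1 = b
      obtain ⟨A, hA⟩ : ∃ A, a + k + 1 - c = A := ⟨_, rfl⟩
      obtain ⟨Cc, hCc⟩ : ∃ Cc, c - (k+1) = Cc := ⟨_, rfl⟩
      rw [show a+1+k-c = A from by omega, show c-k-1 = Cc from by omega,
        show c-k = Cc+1 from by omega, show b-1-k = 0 from by omega,
        show a+(k+1)-c = A from by omega, show c-(k+1) = Cc from by omega,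
        show b-(k+1) = 0 from by omega,
        show (b:ℂ) = (((k+1:ℕ)):ℂ) from by exact_mod_cast congrArg (Nat.cast : ℕ → ℂ) (by omega : b = k+1)]
      rw [zero_mul, zero_smul, zero_sub, ← neg_smul]
      congr 1
      exact key6 A Cc k
    · -- FTF : k = c
      rw [show c-k = 0 from by omega]
      simp
    · -- FFT impossible
      exfalso; omega
    · -- FFF
      simp
  · -- boundary k = 0 term
    simp only [cY]
    simp only [Nat.add_zero, Nat.sub_zero]
    split_ifs with h1 h2 h3
    · obtain ⟨A, hA⟩ : ∃ A, a - c = A := ⟨_, rfl⟩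
      obtain ⟨B, hB⟩ : ∃ B, b - 1 = B := ⟨_, rfl⟩
      rw [show (b:ℂ) = (((B+1:ℕ)):ℂ) from by
          exact_mod_cast congrArg (Nat.cast : ℕ → ℂ) (by omega : b = B+1),
        show a+1-c-1 = A from by omega, show a+1-c = A+1 from by omega,
        show a-c = A from by omega, show b-1 = B from by omega,
        show b = B+1 from by omega]
      congr 1
      exact key4 A B c
    · rw [show a+1-c = 0 from by omega]
      simp
    · exfalso; omega
    · simp
/-! ### operator lemmas -/

lemma X3_smul (α : ℂ) (Q : R4) : X3 (α • Q) = α • X3 Q := by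
  unfold X3
  simp only [Derivation.map_smul, mul_smul_comm]
  rw [← smul_add, ← smul_sub, ← smul_sub, smul_comm]

lemma Xp_smul (α : ℂ) (Q : R4) : Xp (α • Q) = α • Xp Q := by
  unfold Xp
  simp only [Derivation.map_smul, mul_smul_comm]
  rw [← smul_sub, smul_comm]

lemma Xm_smul (α : ℂ) (Q : R4) : Xm (α • Q) = α • Xm Q := by
  unfold Xm
  simp only [Derivation.map_smul, mul_smul_comm]
  rw [← smul_sub, smul_comm]

lemma X3_Tm (a b c : ℕ) (hc : c ≤ a + b) :
    X3 (Tm a b c) = (Complex.I / 2 * ((b:ℂ) - (a:ℂ))) • Tm a b c := by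
  unfold X3
  rw [X3'_Tm a b c hc, smul_smul]

lemma Xp_Tm (a b c : ℕ) (hc : c ≤ a + b) (hb : 1 ≤ b) :
    Xp (Tm a b c) = (Complex.I * ((a:ℂ) + 1)) • Tm (a+1) (b-1) c := by
  unfold Xp
  rw [Xp'_Tm a b c hc hb, smul_smul]

lemma Xm_Tm (a b c : ℕ) (hc : c ≤ a + b) (hb : 1 ≤ b) :
    Xm (Tm (a+1) (b-1) c) = (Complex.I * (b:ℂ)) • Tm a b c := by
  unfold Xm
  rw [Xm'_Tm a b c hc hb, smul_smul]

lemma sqrtK (a b c d : ℕ) (hb : 1 ≤ b) :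
    ((Real.sqrt b : ℝ) : ℂ) * ((-1:ℂ)^(b-1) *
      (Real.sqrt (((a+1).factorial * (b-1).factorial * c.factorial * d.factorial : ℕ)) : ℂ))
    = -(((Real.sqrt (a + 1) : ℝ) : ℂ) * ((-1:ℂ)^b *
      (Real.sqrt ((a.factorial * b.factorial * c.factorial * d.factorial : ℕ)) : ℂ))) := by
  have hsign : ((-1:ℂ))^b = -((-1:ℂ))^(b-1) := by
    conv_lhs => rw [show b = (b-1)+1 from by omega]
    rw [pow_succ]; ring
  have h1 : Real.sqrt (b:ℝ) *
      Real.sqrt ((((a+1).factorial * (b-1).factorial * c.factorial * d.factorial : ℕ)):ℝ)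
      = Real.sqrt ((a:ℝ)+1) *
        Real.sqrt (((a.factorial * b.factorial * c.factorial * d.factorial : ℕ)):ℝ) := by
    rw [← Real.sqrt_mul (by positivity), ← Real.sqrt_mul (by positivity)]
    congr 1
    have key : b * ((a+1).factorial * (b-1).factorial * c.factorial * d.factorial)
        = (a+1) * (a.factorial * b.factorial * c.factorial * d.factorial) := by
      have e2 : b.factorial = b * (b-1).factorial := by
        cases b with
        | zero => omega
        | succ n => simp [Nat.factorial_succ]
      rw [Nat.factorial_succ, e2]; ring
    exact_mod_cast key
  calc ((Real.sqrt b : ℝ) : ℂ) * ((-1:ℂ)^(b-1) *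
      (Real.sqrt (((a+1).factorial * (b-1).factorial * c.factorial * d.factorial : ℕ)) : ℂ))
      = ((-1:ℂ)^(b-1)) * (((Real.sqrt (b:ℝ) *
        Real.sqrt ((((a+1).factorial * (b-1).factorial * c.factorial * d.factorial : ℕ)):ℝ)):ℝ) : ℂ) := by
        push_cast; ring
    _ = ((-1:ℂ)^(b-1)) * (((Real.sqrt ((a:ℝ)+1) *
        Real.sqrt (((a.factorial * b.factorial * c.factorial * d.factorial : ℕ)):ℝ)):ℝ) : ℂ) := by
        rw [h1]
    _ = _ := by rw [hsign]; push_cast; ring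

/-- eigenspinor component equations. With a = j+s, b = j−s, c = j+m,
d = j−m (so 2j = a+b) and s ≤ j−1 (i.e. 1 ≤ b), for ψ₁ = √(j+s+1)·Y^j_{sm},
ψ₂ = √(j−s)·Y^j_{s+1,m} one has 2i(X₃ψ₁ + X₋ψ₂) = 2j·ψ₁ and
2i(X₊ψ₁ − X₃ψ₂) = 2j·ψ₂; for φ₁ = −√(j−s)·Y^j_{sm}, φ₂ = √(j+s+1)·Y^j_{s+1,m} one has
2i(X₃φ₁ + X₋φ₂) = −(2j+2)·φ₁ and 2i(X₊φ₁ − X₃φ₂) = −(2j+2)·φ₂. -/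
theorem dirac_eigenspinor_components (a b c d : ℕ) (habcd : a + b = c + d) (hb : 1 ≤ b)
    (ψ₁ ψ₂ φ₁ φ₂ : R4)
    (hψ₁ : ψ₁ = ((Real.sqrt (a + 1) : ℝ) : ℂ) • Ypoly a b c d)
    (hψ₂ : ψ₂ = ((Real.sqrt b : ℝ) : ℂ) • Ypoly (a + 1) (b - 1) c d)
    (hφ₁ : φ₁ = -(((Real.sqrt b : ℝ) : ℂ) • Ypoly a b c d))
    (hφ₂ : φ₂ = ((Real.sqrt (a + 1) : ℝ) : ℂ) • Ypoly (a + 1) (b - 1) c d) :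
    (2 * Complex.I) • (X3 ψ₁ + Xm ψ₂) = ((a + b : ℕ) : ℂ) • ψ₁ ∧
      (2 * Complex.I) • (Xp ψ₁ - X3 ψ₂) = ((a + b : ℕ) : ℂ) • ψ₂ ∧
        (2 * Complex.I) • (X3 φ₁ + Xm φ₂) = -(((a + b + 2 : ℕ) : ℂ) • φ₁) ∧
          (2 * Complex.I) • (Xp φ₁ - X3 φ₂) = -(((a + b + 2 : ℕ) : ℂ) • φ₂) := by
  have hc : c ≤ a + b := by omega
  have hcb : c ≤ (a + 1) + (b - 1) := by omega
  subst hψ₁ hψ₂ hφ₁ hφ₂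
  rw [Ypoly_eq a b c d, Ypoly_eq (a+1) (b-1) c d]
  set u : ℂ := ((Real.sqrt (a + 1) : ℝ) : ℂ) with hu
  set v : ℂ := ((Real.sqrt b : ℝ) : ℂ) with hv
  set P : ℂ := (-1 : ℂ) ^ b *
      (Real.sqrt ((a.factorial * b.factorial * c.factorial * d.factorial : ℕ)) : ℂ) with hP
  set P' : ℂ := (-1 : ℂ) ^ (b-1) *
      (Real.sqrt (((a+1).factorial * (b-1).factorial * c.factorial * d.factorial : ℕ)) : ℂ) with hP'
  have K : v * P' = -(u * P) := by rw [hu, hv, hP, hP']; exact sqrtK a b c d hb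
  have hI : Complex.I * Complex.I = -1 := Complex.I_mul_I
  have hu2 : u * u = (a:ℂ) + 1 := by
    rw [hu, ← Complex.ofReal_mul, Real.mul_self_sqrt (by positivity)]
    push_cast; ring
  have hv2 : v * v = (b:ℂ) := by
    rw [hv, ← Complex.ofReal_mul, Real.mul_self_sqrt (by positivity)]
    norm_cast
  have hbuP' : (b:ℂ) * (u * P') = -(((a:ℂ)+1) * (v * P)) := by
    linear_combination (u*v)*K + (-(u*P'))*hv2 + (-(v*P))*hu2
  refine ⟨?_, ?_, ?_, ?_⟩
  · rw [X3_smul, X3_smul, Xm_smul, Xm_smul, X3_Tm a b c hc, Xm_Tm a b c hc hb]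
    simp only [smul_smul, smul_add]
    rw [← add_smul]
    congr 1
    push_cast
    linear_combination (u*P*((b:ℂ)-(a:ℂ)) + 2*(b:ℂ)*v*P')*hI + (-2*(b:ℂ))*K
  · rw [Xp_smul, Xp_smul, X3_smul, X3_smul, Xp_Tm a b c hc hb, X3_Tm (a+1) (b-1) c hcb]
    simp only [smul_smul, smul_sub]
    rw [← sub_smul]
    congr 1
    push_cast [Nat.cast_sub hb]
    linear_combination (2*u*P*((a:ℂ)+1) - v*P'*((b:ℂ)-(a:ℂ)-2))*hI + (-2*((a:ℂ)+1))*K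
  · rw [← neg_smul, X3_smul, X3_smul, Xm_smul, Xm_smul, X3_Tm a b c hc, Xm_Tm a b c hc hb]
    simp only [smul_smul, smul_add]
    rw [← add_smul, ← neg_smul]
    congr 1
    push_cast
    linear_combination (-(((a:ℂ)+(b:ℂ)+2))*v*P)*hI + (2*Complex.I*Complex.I)*hbuP'
  · rw [← neg_smul, Xp_smul, Xp_smul, X3_smul, X3_smul, Xp_Tm a b c hc hb,
      X3_Tm (a+1) (b-1) c hcb]
    simp only [smul_smul, smul_sub]
    rw [← sub_smul, ← neg_smul]
    congr 1
    push_cast [Nat.cast_sub hb]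
    linear_combination (-2*v*P*((a:ℂ)+1) - u*P'*((b:ℂ)-(a:ℂ)-2))*hI + 2*hbuP'
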